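/- Let G be a finitely generated group with finite generating set X, and suppose that for every finite-index normal subgroup N and every g ∈ G, lim_{n→∞} |gN ∩ B_X(n)| / |B_X(n)| = 1/[G:N]. Then for every finite-index normal subgroup N of G, dc_X(G) ≤ dc(G/N). -/

import Mathlib

open Filter

/-- The ball of radius `n` in the word metric on `G` with respect to `X`. -/
def ball {G : Type*} [Group G] (X : Finset G) (n : ℕ) : Set G :=
  {g | ∃ l : List G, l.length ≤ n ∧ (∀ x ∈ l, x ∈ X ∨ x⁻¹ ∈ X) ∧ l.prod = g}

/-- The degree of commutativity of `G` with respect to the finite generating set `X`. -/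
noncomputable def dcX {G : Type*} [Group G] (X : Finset G) : ℝ :=
  limsup (fun n =>
    (Nat.card {p : G × G // p.1 ∈ ball X n ∧ p.2 ∈ ball X n ∧ p.1 * p.2 = p.2 * p.1} : ℝ) /
      (Nat.card (ball X n) : ℝ) ^ 2) atTop

/-- Degree of commutativity of a group (meaningful for finite groups). -/
noncomputable def dc (G : Type*) [Group G] : ℚ :=
  (Nat.card {p : G × G // p.1 * p.2 = p.2 * p.1} : ℚ) / (Nat.card G : ℚ) ^ 2

lemma ball_finite {G : Type*} [Group G] (X : Finset G) (n : ℕ) : (ball X n).Finite := by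
  induction n with
  | zero =>
    apply Set.Finite.subset (Set.finite_singleton (1 : G))
    rintro g ⟨l, hl, -, rfl⟩
    simp [List.length_eq_zero_iff.mp (Nat.le_zero.mp hl)]
  | succ n ih =>
    have hS : (insert (1 : G) ((X : Set G) ∪ ((X : Set G))⁻¹)).Finite :=
      (X.finite_toSet.union X.finite_toSet.inv).insert 1
    apply Set.Finite.subset (hS.mul ih)
    rintro g ⟨l, hl, hmem, rfl⟩
    cases l with
    | nil =>
      exact ⟨1, Set.mem_insert _ _, 1, ⟨[], by simp⟩, by simp⟩
    | cons a t =>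
      refine ⟨a, ?_, t.prod, ⟨t, ?_, fun x hx => hmem x (List.mem_cons_of_mem a hx), rfl⟩,
        by simp⟩
      · rcases hmem a List.mem_cons_self with h | h
        · exact Set.mem_insert_of_mem _ (Set.mem_union_left _ h)
        · exact Set.mem_insert_of_mem _ (Set.mem_union_right _ (by simpa using h))
      · simpa using Nat.lt_succ_iff.mp (lt_of_lt_of_le (Nat.lt_succ_self _) hl)

lemma one_mem_ball {G : Type*} [Group G] (X : Finset G) (n : ℕ) : (1 : G) ∈ ball X n :=
  ⟨[], by simp, by simp, by simp⟩

set_option maxHeartbeats 1000000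

/-- If every coset of every finite-index normal subgroup is equidistributed in the
balls of `(G, X)`, then `dc_X(G) ≤ dc(G/N)` for every finite-index normal `N`. -/
theorem dcX_le_dc_quotient (G : Type*) [Group G] (X : Finset G)
    (hX : Subgroup.closure (X : Set G) = ⊤)
    (hBV : ∀ N : Subgroup G, N.Normal → N.FiniteIndex → ∀ g : G,
      Tendsto (fun n =>
          (Nat.card {x : G // g⁻¹ * x ∈ N ∧ x ∈ ball X n} : ℝ) /
            (Nat.card (ball X n) : ℝ)) atTop (nhds (1 / (N.index : ℝ)))) :
    ∀ N : Subgroup G, ∀ hN : N.Normal, N.FiniteIndex →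
      letI := hN; dcX X ≤ (dc (G ⧸ N) : ℝ) := by
  intro N hN hfi
  haveI := hN
  haveI := hfi
  classical
  haveI : Fintype (G ⧸ N) := Fintype.ofFinite _
  show dcX X ≤ (dc (G ⧸ N) : ℝ)
  set Q := G ⧸ N with hQ
  set φ : G → Q := (QuotientGroup.mk : G → G ⧸ N) with hφ
  set Bf : ℕ → Finset G := fun n => (ball_finite X n).toFinset with hBf
  set fib : ℕ → Q → Finset G := fun n a => (Bf n).filter (fun x => φ x = a) with hfib
  set P : Finset (Q × Q) := Finset.univ.filter (fun c => c.1 * c.2 = c.2 * c.1) with hP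
  set r : Q → ℕ → ℝ := fun a n => ((fib n a).card : ℝ) / ((Bf n).card : ℝ) with hr
  have hmemB : ∀ n (x : G), x ∈ Bf n ↔ x ∈ ball X n := fun n x => Set.Finite.mem_toFinset _
  have hBpos : ∀ n, 0 < ((Bf n).card : ℝ) := by
    intro n
    have : (1 : G) ∈ Bf n := (hmemB n 1).mpr (one_mem_ball X n)
    exact_mod_cast Finset.card_pos.mpr ⟨1, this⟩
  have hcardball : ∀ n, Nat.card (ball X n) = (Bf n).card := by
    intro n
    rw [hBf, Nat.card_coe_set_eq, Set.ncard_eq_toFinset_card _ (ball_finite X n)]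
  -- convergence of fiber ratios
  have hrt : ∀ a : Q, Tendsto (r a) atTop (nhds (1 / (N.index : ℝ))) := by
    intro a
    have h := hBV N hN hfi a.out
    have heq : (fun n => (Nat.card {x : G // a.out⁻¹ * x ∈ N ∧ x ∈ ball X n} : ℝ) /
        (Nat.card (ball X n) : ℝ)) = r a := by
      funext n
      have hc : Nat.card {x : G // a.out⁻¹ * x ∈ N ∧ x ∈ ball X n} = (fib n a).card := by
        rw [← Nat.card_eq_finsetCard]
        apply Nat.card_congr
        apply Equiv.subtypeEquivRight
        intro x
        simp only [hfib, Finset.mem_filter, hmemB, hφ]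
        constructor
        · rintro ⟨h1, h2⟩
          exact ⟨h2, by rw [← QuotientGroup.eq.mpr h1, QuotientGroup.out_eq']⟩
        · rintro ⟨h2, h1⟩
          refine ⟨QuotientGroup.eq.mp ?_, h2⟩
          rw [QuotientGroup.out_eq', ← h1]
      rw [hc, hcardball, hr]
    rw [heq] at h
    exact h
  -- the per-n inequality
  have key : ∀ n,
      (Nat.card {p : G × G // p.1 ∈ ball X n ∧ p.2 ∈ ball X n ∧ p.1 * p.2 = p.2 * p.1} : ℝ) /
        (Nat.card (ball X n) : ℝ) ^ 2 ≤ ∑ c ∈ P, r c.1 n * r c.2 n := by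
    intro n
    set Cf : Finset (G × G) := (Bf n ×ˢ Bf n).filter (fun p => p.1 * p.2 = p.2 * p.1) with hCf
    set Df : Finset (G × G) :=
      (Bf n ×ˢ Bf n).filter (fun p => φ p.1 * φ p.2 = φ p.2 * φ p.1) with hDf
    have h1 : Nat.card {p : G × G // p.1 ∈ ball X n ∧ p.2 ∈ ball X n ∧ p.1 * p.2 = p.2 * p.1}
        = Cf.card := by
      rw [← Nat.card_eq_finsetCard]
      apply Nat.card_congr
      apply Equiv.subtypeEquivRight
      intro p
      simp only [hCf, Finset.mem_filter, Finset.mem_product, hmemB]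
      tauto
    have h2 : Cf.card ≤ Df.card := by
      apply Finset.card_le_card
      intro p hp
      simp only [hCf, hDf, Finset.mem_filter] at hp ⊢
      refine ⟨hp.1, ?_⟩
      have := congrArg φ hp.2
      simpa only [hφ, QuotientGroup.mk_mul] using this
    have h3 : Df.card = ∑ c ∈ P, (fib n c.1).card * (fib n c.2).card := by
      rw [Finset.card_eq_sum_card_fiberwise (f := fun p : G × G => (φ p.1, φ p.2)) (t := P)]
      · refine Finset.sum_congr rfl fun c hc => ?_
        have hcc : c.1 * c.2 = c.2 * c.1 := by
          simpa [hP] using hc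
        have : Df.filter (fun p : G × G => (φ p.1, φ p.2) = c) = fib n c.1 ×ˢ fib n c.2 := by
          ext p
          simp only [hDf, hfib, Finset.mem_filter, Finset.mem_product, Prod.ext_iff]
          constructor
          · rintro ⟨⟨hm, -⟩, h1', h2'⟩
            exact ⟨⟨hm.1, h1'⟩, hm.2, h2'⟩
          · rintro ⟨⟨hm1, h1'⟩, hm2, h2'⟩
            exact ⟨⟨⟨hm1, hm2⟩, by rw [h1', h2', hcc]⟩, h1', h2'⟩
        rw [this, Finset.card_product]
      · intro p hp
        simp only [hDf, Finset.mem_coe, Finset.mem_filter] at hp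
        simp [hP, hp.2]
    rw [h1, hcardball]
    have hBne : ((Bf n).card : ℝ) ≠ 0 := ne_of_gt (hBpos n)
    calc (Cf.card : ℝ) / ((Bf n).card : ℝ) ^ 2
        ≤ (Df.card : ℝ) / ((Bf n).card : ℝ) ^ 2 := by
          gcongr
          
      _ = ∑ c ∈ P, r c.1 n * r c.2 n := by
          rw [h3]
          push_cast
          rw [Finset.sum_div]
          refine Finset.sum_congr rfl fun c _ => ?_
          rw [hr, div_mul_div_comm, ← pow_two]
  -- the limit of the right-hand side
  have hsum : Tendsto (fun n => ∑ c ∈ P, r c.1 n * r c.2 n) atTop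
      (nhds (∑ c ∈ P, (1 / (N.index : ℝ)) * (1 / (N.index : ℝ)))) := by
    apply tendsto_finset_sum
    intro c _
    exact (hrt c.1).mul (hrt c.2)
  have hqne : ((N.index : ℝ)) ≠ 0 := by
    exact_mod_cast hfi.index_ne_zero
  have hL : (∑ c ∈ P, (1 / (N.index : ℝ)) * (1 / (N.index : ℝ))) = (dc Q : ℝ) := by
    rw [Finset.sum_const, nsmul_eq_mul]
    have hcQ : Nat.card Q = N.index := (Subgroup.index_eq_card N).symm
    have hcP : Nat.card {p : Q × Q // p.1 * p.2 = p.2 * p.1} = P.card := by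
      rw [Nat.card_eq_fintype_card, Fintype.card_subtype]
    rw [dc]
    push_cast [hcP, hcQ]
    ring
  have hub : ∀ n, (Nat.card {p : G × G // p.1 ∈ ball X n ∧ p.2 ∈ ball X n ∧
      p.1 * p.2 = p.2 * p.1} : ℝ) / (Nat.card (ball X n) : ℝ) ^ 2
      ≤ ∑ c ∈ P, r c.1 n * r c.2 n := key
  have hvb : IsBoundedUnder (· ≤ ·) atTop (fun n => ∑ c ∈ P, r c.1 n * r c.2 n) :=
    hsum.isBoundedUnder_le
  have hub2 : IsBoundedUnder (· ≤ ·) atTop (fun n =>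
      (Nat.card {p : G × G // p.1 ∈ ball X n ∧ p.2 ∈ ball X n ∧ p.1 * p.2 = p.2 * p.1} : ℝ) /
        (Nat.card (ball X n) : ℝ) ^ 2) :=
    hvb.mono_le (Eventually.of_forall hub)
  have hcob : IsCoboundedUnder (· ≤ ·) atTop (fun n =>
      (Nat.card {p : G × G // p.1 ∈ ball X n ∧ p.2 ∈ ball X n ∧ p.1 * p.2 = p.2 * p.1} : ℝ) /
        (Nat.card (ball X n) : ℝ) ^ 2) := by
    apply IsBoundedUnder.isCoboundedUnder_le
    refine isBoundedUnder_of ⟨0, fun n => ?_⟩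
    positivity
  calc dcX X ≤ limsup (fun n => ∑ c ∈ P, r c.1 n * r c.2 n) atTop :=
        limsup_le_limsup (Eventually.of_forall hub) hcob hvb
    _ = (dc Q : ℝ) := by rw [hsum.limsup_eq, hL]
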